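/- For every natural number n, the number of monotone Boolean functions of n+2 variables equals the sum over all pairs (x, y) of monotone Boolean functions of n variables of the square of the interval size: d_{n+2} = Σ_{x ∈ D_n} Σ_{y ∈ D_n} (|Icc x y|)², where Icc x y = {z ∈ D_n : x ≤ z ≤ y}. -/

import Mathlib

/-- `D_n`, the poset of monotone Boolean functions of `n` variables. -/
abbrev DedekindPoset (n : ℕ) : Type := (Fin n → Bool) →o Bool

noncomputable instance (n : ℕ) : Fintype (DedekindPoset n) :=
  Fintype.ofInjective (fun f => (f : (Fin n → Bool) → Bool)) DFunLike.coe_injective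

/-- Selector: pick one of the four corner functions according to two booleans. -/
def DedekindSel {n : ℕ} (x z1 z2 y : DedekindPoset n) (a b : Bool) : DedekindPoset n :=
  bif a then (bif b then y else z2) else (bif b then z1 else x)

lemma DedekindSel_mono {n : ℕ} (x z1 z2 y : DedekindPoset n)
    (h1 : x ≤ z1) (h2 : z1 ≤ y) (h3 : x ≤ z2) (h4 : z2 ≤ y)
    {a a' b b' : Bool} (ha : a ≤ a') (hb : b ≤ b') :
    DedekindSel x z1 z2 y a b ≤ DedekindSel x z1 z2 y a' b' := by
  cases a <;> cases a' <;> cases b <;> cases b' <;>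
    simp only [DedekindSel, cond_false, cond_true] <;>
    first
      | exact le_refl _
      | exact h1
      | exact h2
      | exact h3
      | exact h4
      | exact h1.trans h2
      | exact absurd ha (by decide)
      | exact absurd hb (by decide)

/-- Build a monotone function of `n+2` variables from four corner functions. -/
def DedekindBuild {n : ℕ} (x z1 z2 y : DedekindPoset n)
    (h1 : x ≤ z1) (h2 : z1 ≤ y) (h3 : x ≤ z2) (h4 : z2 ≤ y) :
    DedekindPoset (n + 2) where
  toFun w := DedekindSel x z1 z2 y (w 0) (w 1) (fun i => w i.succ.succ)
  monotone' := by
    intro w w' hw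
    have hv : (fun i : Fin n => w i.succ.succ) ≤ fun i : Fin n => w' i.succ.succ :=
      fun i => hw _
    calc DedekindSel x z1 z2 y (w 0) (w 1) (fun i => w i.succ.succ)
        ≤ DedekindSel x z1 z2 y (w 0) (w 1) (fun i => w' i.succ.succ) :=
          (DedekindSel x z1 z2 y (w 0) (w 1)).monotone hv
      _ ≤ DedekindSel x z1 z2 y (w' 0) (w' 1) (fun i => w' i.succ.succ) :=
          DedekindSel_mono x z1 z2 y h1 h2 h3 h4 (hw 0) (hw 1) _

/-- Restrict a monotone function of `n+2` variables by fixing the first two inputs. -/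
def DedekindDown {n : ℕ} (f : DedekindPoset (n + 2)) (a b : Bool) : DedekindPoset n where
  toFun v := f (Fin.cons a (Fin.cons b v))
  monotone' := by
    intro v v' hv
    apply f.monotone
    intro i
    refine Fin.cases ?_ (fun j => ?_) i
    · simp
    · refine Fin.cases ?_ (fun k => ?_) j <;> simp [hv _]

lemma DedekindDown_mono {n : ℕ} (f : DedekindPoset (n + 2)) {a a' b b' : Bool}
    (ha : a ≤ a') (hb : b ≤ b') : DedekindDown f a b ≤ DedekindDown f a' b' := by
  intro v
  apply f.monotone
  intro i
  refine Fin.cases ?_ (fun j => ?_) i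
  · simpa using ha
  · refine Fin.cases ?_ (fun k => ?_) j <;> simp [hb]

/-- The key equivalence: a monotone function of `n+2` variables is the same as a pair
`(x, y)` of monotone functions of `n` variables together with two elements of `Icc x y`. -/
noncomputable def DedekindEquiv (n : ℕ) :
    DedekindPoset (n + 2) ≃
      Σ p : DedekindPoset n × DedekindPoset n,
        ({z : DedekindPoset n // p.1 ≤ z ∧ z ≤ p.2} ×
          {z : DedekindPoset n // p.1 ≤ z ∧ z ≤ p.2}) where
  toFun f :=
    ⟨(DedekindDown f false false, DedekindDown f true true),
      ⟨DedekindDown f false true,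
        DedekindDown_mono f (by simp) (by simp), DedekindDown_mono f (by simp) (by simp)⟩,
      ⟨DedekindDown f true false,
        DedekindDown_mono f (by simp) (by simp), DedekindDown_mono f (by simp) (by simp)⟩⟩
  invFun := fun ⟨⟨x, y⟩, ⟨z1, h1, h2⟩, ⟨z2, h3, h4⟩⟩ =>
    DedekindBuild x z1 z2 y h1 h2 h3 h4
  left_inv := by
    intro f
    ext w
    have hs : ∀ a b, DedekindSel (DedekindDown f false false) (DedekindDown f false true)
        (DedekindDown f true false) (DedekindDown f true true) a b = DedekindDown f a b := by
      intro a b; cases a <;> cases b <;> rfl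
    show DedekindSel _ _ _ _ (w 0) (w 1) (fun i => w i.succ.succ) = f w
    rw [hs]
    show f (Fin.cons (w 0) (Fin.cons (w 1) fun i => w i.succ.succ)) = f w
    congr 1
    funext i
    refine Fin.cases rfl (fun j => ?_) i
    refine Fin.cases ?_ (fun k => ?_) j <;> simp [Fin.succ_zero_eq_one]
  right_inv := by
    rintro ⟨⟨x, y⟩, ⟨z1, h1, h2⟩, ⟨z2, h3, h4⟩⟩
    have key : ∀ a b : Bool, DedekindDown (DedekindBuild x z1 z2 y h1 h2 h3 h4) a b =
        DedekindSel x z1 z2 y a b := by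
      intro a b
      ext v
      have h2' : (fun i : Fin n => (Fin.cons a (Fin.cons b v) : Fin (n + 2) → Bool) i.succ.succ)
          = v := by
        funext i; simp [Fin.cons_succ]
      show DedekindSel x z1 z2 y ((Fin.cons a (Fin.cons b v) : Fin (n + 2) → Bool) 0)
          ((Fin.cons a (Fin.cons b v) : Fin (n + 2) → Bool) 1)
          (fun i => (Fin.cons a (Fin.cons b v) : Fin (n + 2) → Bool) i.succ.succ)
          = DedekindSel x z1 z2 y a b v
      rw [h2']
      congr 1
    have e1 := key false false
    have e2 := key false true
    have e3 := key true false
    have e4 := key true true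
    simp only [DedekindSel, cond_false, cond_true] at e1 e2 e3 e4
    simp [e1, e2, e3, e4]
    congr 1 <;> simp [e1, e2, e3, e4]

/-- The `n`-th Dedekind number `d_n` satisifes
`d_(n+2) = Σ_{x ∈ D_n} Σ_{y ∈ D_n} (#Icc x y)²`. -/
theorem dedekind_add_two_eq_sum_sq_intervals (n : ℕ) :
    Nat.card (DedekindPoset (n + 2)) =
      ∑ x : DedekindPoset n, ∑ y : DedekindPoset n,
        (Nat.card {z : DedekindPoset n // x ≤ z ∧ z ≤ y}) ^ 2 := by
  classical
  rw [Nat.card_congr (DedekindEquiv n)]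
  rw [Nat.card_eq_fintype_card, Fintype.card_sigma, Fintype.sum_prod_type]
  refine Finset.sum_congr rfl fun x _ => Finset.sum_congr rfl fun y _ => ?_
  rw [Fintype.card_prod, sq, Nat.card_eq_fintype_card]
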